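/- Let T = (S,Σ,κ) be an STS, μ a probability measure on S, and B ∈ Σ. Then T is strongly decisive w.r.t. B from μ (SD(μ,B)) if and only if T is persistently decisive w.r.t. B from μ (PD(μ,B)). -/

import Mathlib

open MeasureTheory ProbabilityTheory ENNReal Filter Topology

namespace STS

variable {S : Type*} [MeasurableSpace S]

/-- Probability of the cylinder `Cyl(A 0, …, A n)` for the Markov chain with kernel `κ`
and initial distribution `μ`. -/
noncomputable def cylProb (κ : Kernel S S) : ℕ → Measure S → (ℕ → Set S) → ℝ≥0∞
  | 0, μ, A => μ (A 0)
  | n + 1, μ, A => ∫⁻ s in A 0, cylProb κ n (κ s) (fun i => A (i + 1)) ∂μ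

/-- `P` assigns to each initial (probability) distribution the path measure (on `ℕ → S`,
with the product σ-algebra) of the time-homogeneous Markov chain with transition kernel `κ`,
as given by the Ionescu–Tulcea construction: it is the unique probability measure giving
cylinders their prescribed probabilities. -/
def IsPathMeasure (κ : Kernel S S) (P : Measure S → Measure (ℕ → S)) : Prop :=
  ∀ μ : Measure S, IsProbabilityMeasure μ →
    IsProbabilityMeasure (P μ) ∧
    ∀ (n : ℕ) (A : ℕ → Set S), (∀ i, MeasurableSet (A i)) →
      P μ {ρ | ∀ i ≤ n, ρ i ∈ A i} = cylProb κ n μ A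

/-- The path event `F B`: eventually reach `B`. -/
def evF (B : Set S) : Set (ℕ → S) := {ρ | ∃ k, ρ k ∈ B}

/-- The path event `F≤n B`. -/
def evFle (n : ℕ) (B : Set S) : Set (ℕ → S) := {ρ | ∃ k ≤ n, ρ k ∈ B}

/-- The path event `F≥p B`. -/
def evFge (p : ℕ) (B : Set S) : Set (ℕ → S) := {ρ | ∃ k, p ≤ k ∧ ρ k ∈ B}

/-- The path event `GF B`: visit `B` infinitely often. -/
def evGF (B : Set S) : Set (ℕ → S) := {ρ | ∀ n, ∃ k, n ≤ k ∧ ρ k ∈ B}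

/-- The path event `FG B`: eventually stay in `B` forever. -/
def evFG (B : Set S) : Set (ℕ → S) := {ρ | ∃ n, ∀ k, n ≤ k → ρ k ∈ B}

/-- The until event `B' U B`. -/
def evU (B' B : Set S) : Set (ℕ → S) := {ρ | ∃ k, ρ k ∈ B ∧ ∀ j < k, ρ j ∈ B'}

/-- The bounded until event `B' U≤n B`. -/
def evUle (n : ℕ) (B' B : Set S) : Set (ℕ → S) := {ρ | ∃ k ≤ n, ρ k ∈ B ∧ ∀ j < k, ρ j ∈ B'}

/-- The avoid-set `B̃` of `B`: states from which `B` is reached with probability `0`. -/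
def avoid (P : Measure S → Measure (ℕ → S)) (B : Set S) : Set S :=
  {s | P (Measure.dirac s) (evF B) = 0}

/-- `T` is decisive w.r.t. `B` from `μ`. -/
def Decisive (P : Measure S → Measure (ℕ → S)) (μ : Measure S) (B : Set S) : Prop :=
  P μ (evF B ∪ evF (avoid P B)) = 1

/-- `T` is strongly decisive w.r.t. `B` from `μ`. -/
def StronglyDecisive (P : Measure S → Measure (ℕ → S)) (μ : Measure S) (B : Set S) : Prop :=
  P μ (evGF B ∪ evF (avoid P B)) = 1

/-- `T` is persistently decisive w.r.t. `B` from `μ`. -/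
def PersistentlyDecisive (P : Measure S → Measure (ℕ → S)) (μ : Measure S) (B : Set S) : Prop :=
  ∀ p : ℕ, P μ (evFge p B ∪ evFge p (avoid P B)) = 1

/-- `PreProb(B)`: measurable sets `B'` from which `B` is reached in one step with positive
probability, whatever the initial distribution concentrated on `B'`. -/
def PreProb (P : Measure S → Measure (ℕ → S)) (B : Set S) : Set (Set S) :=
  {B' | MeasurableSet B' ∧ ∀ μ' : Measure S, IsProbabilityMeasure μ' → μ' B' = 1 →
    0 < P μ' {ρ | ρ 0 ∈ B' ∧ ρ 1 ∈ B}}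

/-- `T` is fair w.r.t. `B` from `μ`. -/
def Fair (P : Measure S → Measure (ℕ → S)) (μ : Measure S) (B : Set S) : Prop :=
  ∀ B' ∈ PreProb P B, 0 < P μ (evGF B') →
    P μ (evGF B ∩ evGF B') = P μ (evGF B')

/-- The one-step measure transformer `Ω_T`. -/
noncomputable def Omega (κ : Kernel S S) (μ : Measure S) : Measure S :=
  μ.bind (fun s => κ s)

/-- Two measures are qualitatively equivalent if they have the same null (measurable) sets. -/
def QualEquiv {T : Type*} [MeasurableSpace T] (μ ν : Measure T) : Prop :=
  ∀ A : Set T, MeasurableSet A → (μ A = 0 ↔ ν A = 0)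

/-- `T₂ = (S₂,κ₂)` is an `α`-abstraction of `T₁ = (S₁,κ₁)`. -/
def IsAbstraction {S₁ S₂ : Type*} [MeasurableSpace S₁] [MeasurableSpace S₂]
    (κ₁ : Kernel S₁ S₁) (κ₂ : Kernel S₂ S₂) (α : S₁ → S₂) : Prop :=
  ∀ μ : Measure S₁, IsProbabilityMeasure μ →
    QualEquiv (Measure.map α (Omega κ₁ μ)) (Omega κ₂ (Measure.map α μ))


/-! ### Auxiliary lemmas for statement 4 -/

section Statement4Aux

variable (κ : Kernel S S) [IsMarkovKernel κ]

lemma measurable_cylProb_kernel : ∀ (n : ℕ) (A : ℕ → Set S), (∀ i, MeasurableSet (A i)) →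
    Measurable fun s => cylProb κ n (κ s) A := by
  intro n
  induction n with
  | zero => intro A hA; exact κ.measurable_coe (hA 0)
  | succ n ih =>
    intro A hA
    simp only [cylProb]
    exact Measurable.setLIntegral_kernel (ih (fun i => A (i+1)) (fun i => hA (i+1))) (hA 0)

omit [IsMarkovKernel κ] in
lemma cylProb_dirac_zero (A : ℕ → Set S) (hA0 : MeasurableSet (A 0)) (s : S) :
    cylProb κ 0 (Measure.dirac s) A = (A 0).indicator 1 s := by
  simp only [cylProb]
  rw [Measure.dirac_apply' _ hA0]

lemma cylProb_dirac_succ (n : ℕ) (A : ℕ → Set S) (hA : ∀ i, MeasurableSet (A i)) (s : S) :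
    cylProb κ (n+1) (Measure.dirac s) A
      = (A 0).indicator (fun s' => cylProb κ n (κ s') (fun i => A (i+1))) s := by
  classical
  simp only [cylProb]
  rw [setLIntegral_dirac' (measurable_cylProb_kernel κ n _ (fun i => hA (i+1))) (hA 0)]
  by_cases h : s ∈ A 0 <;> simp [h]

lemma measurable_cylProb_dirac (n : ℕ) (A : ℕ → Set S) (hA : ∀ i, MeasurableSet (A i)) :
    Measurable fun s => cylProb κ n (Measure.dirac s) A := by
  cases n with
  | zero =>
    simp only [fun s => cylProb_dirac_zero κ A (hA 0) s]
    exact (measurable_indicator_const_iff 1).mpr (hA 0)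
  | succ n =>
    simp only [fun s => cylProb_dirac_succ κ n A hA s]
    exact ((measurable_cylProb_kernel κ n _ (fun i => hA (i+1)))).indicator (hA 0)

lemma cylProb_eq_lintegral (n : ℕ) (A : ℕ → Set S) (hA : ∀ i, MeasurableSet (A i))
    (μ : Measure S) :
    cylProb κ n μ A = ∫⁻ s, cylProb κ n (Measure.dirac s) A ∂μ := by
  cases n with
  | zero =>
    simp only [fun s => cylProb_dirac_zero κ A (hA 0) s]
    rw [lintegral_indicator_one (hA 0)]
    rfl
  | succ n =>
    simp only [fun s => cylProb_dirac_succ κ n A hA s]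
    rw [lintegral_indicator (hA 0)]
    rfl

omit [IsMarkovKernel κ] in
lemma cylProb_zero (μ : Measure S) (A : ℕ → Set S) : cylProb κ 0 μ A = μ (A 0) := rfl

omit [IsMarkovKernel κ] in
lemma cylProb_succ (n : ℕ) (μ : Measure S) (A : ℕ → Set S) :
    cylProb κ (n+1) μ A = ∫⁻ s in A 0, cylProb κ n (κ s) (fun i => A (i + 1)) ∂μ := rfl

/-- The pattern `univ^k, C, Cᶜ` has `cylProb` zero when `C` is one-step invariant. -/
lemma cylProb_pattern (C : Set S) (hC : MeasurableSet C)
    (hstep : ∀ s ∈ C, κ s Cᶜ = 0) :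
    ∀ (k : ℕ) (μ : Measure S),
      cylProb κ (k+1) μ (fun i => if i < k then Set.univ else if i = k then C else Cᶜ) = 0 := by
  intro k
  induction k with
  | zero =>
    intro μ
    rw [cylProb_succ,
      show (if (0:ℕ) < 0 then Set.univ else if (0:ℕ) = 0 then C else Cᶜ) = C by norm_num]
    refine (setLIntegral_congr_fun hC (fun s hs => ?_)).trans
      lintegral_zero
    rw [cylProb_zero,
      show (if (0:ℕ) + 1 < 0 then Set.univ else if (0:ℕ) + 1 = 0 then C else Cᶜ) = Cᶜ
        by norm_num]
    exact hstep s hs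
  | succ k ih =>
    intro μ
    have htail : (fun i => if i + 1 < k + 1 then Set.univ else if i + 1 = k + 1 then C else Cᶜ)
        = fun i => if i < k then Set.univ else if i = k then C else Cᶜ := by
      funext i
      by_cases h1 : i < k
      · rw [if_pos (by omega), if_pos h1]
      · by_cases h2 : i = k
        · rw [if_neg (by omega), if_pos (by omega), if_neg h1, if_pos h2]
        · rw [if_neg (by omega), if_neg (by omega), if_neg h1, if_neg h2]
    rw [cylProb_succ,
      show (if (0:ℕ) < k + 1 then Set.univ else if (0:ℕ) = k + 1 then C else Cᶜ) = Set.univ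
        from if_pos (Nat.succ_pos k), Measure.restrict_univ]
    refine (lintegral_congr fun s => ?_).trans lintegral_zero
    rw [htail]
    exact ih (κ s)

end Statement4Aux

/-- Rectangular cylinders. -/
def Rect (S : Type*) [MeasurableSpace S] : Set (Set (ℕ → S)) :=
  {C | ∃ (n : ℕ) (A : ℕ → Set S), (∀ i, MeasurableSet (A i)) ∧ C = {ρ | ∀ i ≤ n, ρ i ∈ A i}}

lemma rect_measurable {C : Set (ℕ → S)} (hC : C ∈ Rect S) : MeasurableSet C := by
  obtain ⟨n, A, hA, rfl⟩ := hC
  have : {ρ : ℕ → S | ∀ i ≤ n, ρ i ∈ A i} = ⋂ i, ⋂ (_ : i ≤ n), (fun ρ => ρ i) ⁻¹' A i := by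
    ext ρ; simp
  rw [this]
  exact MeasurableSet.iInter fun i => MeasurableSet.iInter fun _ =>
    measurable_pi_apply i (hA i)

lemma isPiSystem_rect : IsPiSystem (Rect S) := by
  rintro C ⟨n, A, hA, rfl⟩ D ⟨m, A', hA', rfl⟩ -
  refine ⟨max n m, fun i => (if i ≤ n then A i else Set.univ) ∩ (if i ≤ m then A' i else Set.univ),
    fun i => MeasurableSet.inter (by split_ifs; exacts [hA i, .univ])
      (by split_ifs; exacts [hA' i, .univ]), ?_⟩
  ext ρ
  simp only [Set.mem_inter_iff, Set.mem_setOf_eq]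
  constructor
  · rintro ⟨h1, h2⟩ i hi
    constructor
    · split_ifs with h; exacts [h1 i h, Set.mem_univ _]
    · split_ifs with h; exacts [h2 i h, Set.mem_univ _]
  · intro h
    constructor
    · intro i hi
      have := (h i (le_trans hi (le_max_left n m))).1
      rwa [if_pos hi] at this
    · intro i hi
      have := (h i (le_trans hi (le_max_right n m))).2
      rwa [if_pos hi] at this

lemma generateFrom_rect : (inferInstance : MeasurableSpace (ℕ → S))
    = MeasurableSpace.generateFrom (Rect S) := by
  refine le_antisymm ?_ (MeasurableSpace.generateFrom_le fun C hC => rect_measurable hC)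
  have h : ∀ (i : ℕ) (A : Set S), MeasurableSet A →
      MeasurableSpace.GenerateMeasurable (Rect S) ((fun ρ : ℕ → S => ρ i) ⁻¹' A) := by
    intro i A hA
    refine .basic _ ⟨i, fun j => if j = i then A else Set.univ, fun j => by
      dsimp only; split
      · exact hA
      · exact .univ, ?_⟩
    ext ρ
    simp only [Set.mem_preimage, Set.mem_setOf_eq]
    constructor
    · intro h j hj; split <;> simp_all
    · intro h; simpa using h i le_rfl
  rw [show (inferInstance : MeasurableSpace (ℕ → S)) = MeasurableSpace.pi from rfl,
    MeasurableSpace.pi]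
  refine iSup_le fun i => ?_
  intro C hC
  obtain ⟨A, hA, rfl⟩ := hC
  exact h i A hA

/-- One-step Markov property for the path measures from Dirac initial distributions,
together with measurability in the starting state. -/
lemma markov (κ : Kernel S S) [IsMarkovKernel κ] (P : Measure S → Measure (ℕ → S))
    (hP : IsPathMeasure κ P) :
    ∀ ⦃E : Set (ℕ → S)⦄, MeasurableSet E →
      Measurable (fun s => P (Measure.dirac s) E) ∧
      ∀ s : S, P (Measure.dirac s) ((fun ρ i => ρ (i+1)) ⁻¹' E)
        = ∫⁻ t, P (Measure.dirac t) E ∂(κ s) := by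
  have hshift : Measurable (fun ρ : ℕ → S => fun i => ρ (i+1)) :=
    measurable_pi_lambda _ fun i => measurable_pi_apply (i+1)
  have hprob : ∀ s : S, IsProbabilityMeasure (P (Measure.dirac s)) :=
    fun s => (hP _ inferInstance).1
  refine MeasurableSpace.induction_on_inter generateFrom_rect isPiSystem_rect ?_ ?_ ?_ ?_
  · constructor
    · simp only [measure_empty]; exact measurable_const
    · intro s; simp
  · intro C hC
    obtain ⟨n, A, hA, rfl⟩ := hC
    have hcyl : ∀ μ : Measure S, IsProbabilityMeasure μ →
        P μ {ρ | ∀ i ≤ n, ρ i ∈ A i} = cylProb κ n μ A := fun μ h => (hP μ h).2 n A hA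
    constructor
    · have : (fun s => P (Measure.dirac s) {ρ | ∀ i ≤ n, ρ i ∈ A i})
          = fun s => cylProb κ n (Measure.dirac s) A := funext fun s => hcyl _ inferInstance
      rw [this]; exact measurable_cylProb_dirac κ n A hA
    · intro s
      have hAm' : ∀ i, MeasurableSet ((fun i => Nat.casesOn i Set.univ A : ℕ → Set S) i) := by
        rintro (_|i); exacts [.univ, hA i]
      have hpre : (fun ρ : ℕ → S => fun i => ρ (i+1)) ⁻¹' {ρ | ∀ i ≤ n, ρ i ∈ A i}
          = {ρ | ∀ i ≤ n+1, ρ i ∈ (fun i => Nat.casesOn i Set.univ A : ℕ → Set S) i} := by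
        ext ρ
        simp only [Set.mem_preimage, Set.mem_setOf_eq]
        constructor
        · rintro h (_|i) hi
          · exact Set.mem_univ _
          · exact h i (by omega)
        · intro h i hi; exact h (i+1) (by omega)
      rw [hpre, (hP _ inferInstance).2 (n+1) _ hAm']
      have hlhs : cylProb κ (n+1) (Measure.dirac s)
          (fun i => Nat.casesOn i Set.univ A : ℕ → Set S) = cylProb κ n (κ s) A := by
        show ∫⁻ t in Set.univ, cylProb κ n (κ t) A ∂(Measure.dirac s) = _
        rw [Measure.restrict_univ, lintegral_dirac' _ (measurable_cylProb_kernel κ n A hA)]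
      rw [hlhs, cylProb_eq_lintegral κ n A hA (κ s)]
      refine lintegral_congr fun t => (hcyl _ inferInstance).symm
  · rintro E hE ⟨hm, he⟩
    have hle : ∀ t, P (Measure.dirac t) E ≤ 1 := fun t => by
      haveI := hprob t; exact prob_le_one
    have hcompl : ∀ t, P (Measure.dirac t) Eᶜ = 1 - P (Measure.dirac t) E := fun t => by
      haveI := hprob t; exact prob_compl_eq_one_sub hE
    constructor
    · have : (fun s => P (Measure.dirac s) Eᶜ) = fun s => 1 - P (Measure.dirac s) E :=
        funext hcompl
      rw [this]; exact hm.const_sub 1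
    · intro s
      have hfin : ∫⁻ t, P (Measure.dirac t) E ∂(κ s) ≠ ⊤ := by
        refine ne_top_of_le_ne_top one_ne_top ?_
        calc ∫⁻ t, P (Measure.dirac t) E ∂(κ s) ≤ ∫⁻ _, 1 ∂(κ s) := lintegral_mono hle
          _ = 1 := by simp
      have h1 : ∫⁻ t, P (Measure.dirac t) Eᶜ ∂(κ s)
          = 1 - ∫⁻ t, P (Measure.dirac t) E ∂(κ s) := by
        simp only [hcompl]
        rw [lintegral_sub hm hfin (Filter.Eventually.of_forall hle)]
        simp
      haveI := hprob s
      rw [Set.preimage_compl, prob_compl_eq_one_sub (hshift hE), he s, h1]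
  · intro f hdisj hfm h
    have hm : ∀ i, Measurable fun s => P (Measure.dirac s) (f i) := fun i => (h i).1
    have hunion : ∀ t, P (Measure.dirac t) (⋃ i, f i) = ∑' i, P (Measure.dirac t) (f i) :=
      fun t => measure_iUnion hdisj hfm
    constructor
    · rw [funext hunion]; exact Measurable.ennreal_tsum hm
    · intro s
      rw [Set.preimage_iUnion,
        measure_iUnion (fun i j hij => (hdisj hij).preimage _) (fun i => hshift (hfm i)),
        tsum_congr (fun i => (h i).2 s), ← lintegral_tsum (fun i => (hm i).aemeasurable)]
      exact lintegral_congr fun t => (hunion t).symm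

lemma evF_measurable {B : Set S} (hB : MeasurableSet B) : MeasurableSet (evF B) := by
  have : evF B = ⋃ k, (fun ρ : ℕ → S => ρ k) ⁻¹' B := by ext ρ; simp [evF]
  rw [this]
  exact MeasurableSet.iUnion fun k => measurable_pi_apply k hB

lemma evFge_measurable (p : ℕ) {B : Set S} (hB : MeasurableSet B) :
    MeasurableSet (evFge p B) := by
  have : evFge p B = ⋃ k, ⋃ (_ : p ≤ k), (fun ρ : ℕ → S => ρ k) ⁻¹' B := by
    ext ρ; simp [evFge]
  rw [this]
  exact MeasurableSet.iUnion fun k => MeasurableSet.iUnion fun _ => measurable_pi_apply k hB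

lemma avoid_measurable (κ : Kernel S S) [IsMarkovKernel κ] (P : Measure S → Measure (ℕ → S))
    (hP : IsPathMeasure κ P) {B : Set S} (hB : MeasurableSet B) :
    MeasurableSet (avoid P B) :=
  (markov κ P hP (evF_measurable hB)).1 (measurableSet_singleton 0)

lemma avoid_step (κ : Kernel S S) [IsMarkovKernel κ] (P : Measure S → Measure (ℕ → S))
    (hP : IsPathMeasure κ P) {B : Set S} (hB : MeasurableSet B)
    {s : S} (hs : s ∈ avoid P B) : κ s ((avoid P B)ᶜ) = 0 := by
  have hm := markov κ P hP (evF_measurable hB)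
  have h0 : P (Measure.dirac s) ((fun ρ i => ρ (i+1)) ⁻¹' evF B) = 0 := by
    refine measure_mono_null ?_ hs
    rintro ρ ⟨k, hk⟩
    exact ⟨k+1, hk⟩
  rw [hm.2 s, lintegral_eq_zero_iff hm.1] at h0
  have h1 := h0
  rw [Filter.EventuallyEq, ae_iff] at h1
  have : (avoid P B)ᶜ = {t | ¬ ((fun t => P (Measure.dirac t) (evF B)) t = (0:S → ℝ≥0∞) t)} := by
    ext t; simp [avoid]
  rw [this]
  exact h1


/-- strong decisiveness and persistent decisiveness w.r.t. `B` from `μ`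
are equivalent. -/
theorem statement_4 {S : Type*} [MeasurableSpace S]
    (κ : Kernel S S) [IsMarkovKernel κ]
    (P : Measure S → Measure (ℕ → S)) (hP : IsPathMeasure κ P)
    (μ : Measure S) (hμ : IsProbabilityMeasure μ)
    (B : Set S) (hB : MeasurableSet B) :
    StronglyDecisive P μ B ↔ PersistentlyDecisive P μ B := by
  have hmA : MeasurableSet (avoid P B) := avoid_measurable κ P hP hB
  haveI hPμ : IsProbabilityMeasure (P μ) := (hP μ hμ).1
  constructor
  · intro hSD p
    -- the exceptional event: leaving the avoid set
    have hbad : ∀ k : ℕ, P μ {ρ : ℕ → S | ρ k ∈ avoid P B ∧ ρ (k+1) ∈ (avoid P B)ᶜ} = 0 := by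
      intro k
      have hset : {ρ : ℕ → S | ρ k ∈ avoid P B ∧ ρ (k+1) ∈ (avoid P B)ᶜ}
          = {ρ : ℕ → S | ∀ i ≤ k + 1, ρ i ∈
              (fun i => if i < k then Set.univ else if i = k then avoid P B else (avoid P B)ᶜ) i}
          := by
        ext ρ
        simp only [Set.mem_setOf_eq]
        constructor
        · rintro ⟨h1, h2⟩ i hi
          try dsimp only
          split_ifs with ha hb
          · exact Set.mem_univ _
          · exact hb ▸ h1
          · have : i = k + 1 := by omega
            exact this ▸ h2
        · intro h
          constructor
          · have := h k (by omega)
            rwa [if_neg (by omega), if_pos rfl] at this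
          · have := h (k+1) le_rfl
            rwa [if_neg (by omega), if_neg (by omega)] at this
      rw [hset, (hP μ hμ).2 (k+1) _ (by
        intro i
        split_ifs
        exacts [.univ, hmA, hmA.compl])]
      exact cylProb_pattern κ (avoid P B) hmA
        (fun s hs => avoid_step κ P hP hB hs) k μ
    set G := ⋃ k, {ρ : ℕ → S | ρ k ∈ avoid P B ∧ ρ (k+1) ∈ (avoid P B)ᶜ} with hGdef
    have hG : P μ G = 0 := measure_iUnion_null hbad
    have hsub : (evGF B ∪ evF (avoid P B)) ⊆ (evFge p B ∪ evFge p (avoid P B)) ∪ G := by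
      intro ρ hρ
      by_cases hG' : ρ ∈ G
      · exact Or.inr hG'
      · left
        rcases hρ with h | h
        · exact Or.inl (h p)
        · obtain ⟨k, hk⟩ := h
          right
          have hstay : ∀ j, ρ (k + j) ∈ avoid P B := by
            intro j
            induction j with
            | zero => simpa using hk
            | succ j ih =>
              by_contra hcon
              exact hG' (Set.mem_iUnion.mpr ⟨k + j, ih, hcon⟩)
          exact ⟨k + p, Nat.le_add_left p k, hstay p⟩
    have h1 : (1:ℝ≥0∞) ≤ P μ (evFge p B ∪ evFge p (avoid P B)) := by
      calc (1:ℝ≥0∞) = P μ (evGF B ∪ evF (avoid P B)) := hSD.symm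
        _ ≤ P μ ((evFge p B ∪ evFge p (avoid P B)) ∪ G) := measure_mono hsub
        _ ≤ P μ (evFge p B ∪ evFge p (avoid P B)) + P μ G := measure_union_le _ _
        _ = P μ (evFge p B ∪ evFge p (avoid P B)) := by rw [hG, add_zero]
    exact le_antisymm prob_le_one h1
  · intro hPD
    have hcompl : ∀ p : ℕ, P μ (evFge p B ∪ evFge p (avoid P B))ᶜ = 0 := by
      intro p
      rw [prob_compl_eq_one_sub ((evFge_measurable p hB).union (evFge_measurable p hmA)),
        hPD p, tsub_self]
    have hsub : (⋂ p, (evFge p B ∪ evFge p (avoid P B))) ⊆ evGF B ∪ evF (avoid P B) := by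
      intro ρ hρ
      by_cases h : ρ ∈ evF (avoid P B)
      · exact Or.inr h
      · left
        intro n
        rcases Set.mem_iInter.mp hρ n with hb | ha
        · exact hb
        · obtain ⟨k, _, hk2⟩ := ha
          exact absurd ⟨k, hk2⟩ h
    have h1 : (1:ℝ≥0∞) ≤ P μ (evGF B ∪ evF (avoid P B)) := by
      calc (1:ℝ≥0∞) = P μ Set.univ := measure_univ.symm
        _ ≤ P μ ((⋂ p, (evFge p B ∪ evFge p (avoid P B)))
              ∪ ⋃ p, (evFge p B ∪ evFge p (avoid P B))ᶜ) := by
            refine measure_mono fun ρ _ => ?_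
            by_cases h : ∀ p : ℕ, ρ ∈ evFge p B ∪ evFge p (avoid P B)
            · exact Or.inl (Set.mem_iInter.mpr h)
            · push_neg at h
              obtain ⟨p, hp⟩ := h
              exact Or.inr (Set.mem_iUnion.mpr ⟨p, hp⟩)
        _ ≤ P μ (⋂ p, (evFge p B ∪ evFge p (avoid P B)))
              + P μ (⋃ p, (evFge p B ∪ evFge p (avoid P B))ᶜ) := measure_union_le _ _
        _ = P μ (⋂ p, (evFge p B ∪ evFge p (avoid P B))) := by
              rw [measure_iUnion_null hcompl, add_zero]
        _ ≤ P μ (evGF B ∪ evF (avoid P B)) := measure_mono hsub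
    exact le_antisymm prob_le_one h1

end STS
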